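/- For all integers k and l, the elements B_k satisfy [B_k, B_l] = (k − l)·B_{k+l} in 𝔤. -/

import Mathlib

/-!
Setup: `E ⊆ ℤ` with `E = -E`, `E ∩ Nℤ = ∅`, `E + N ⊆ E`; a ℂ-Lie algebra `𝔤`
with a central element `c`, principal Heisenberg generators `Λ_j` (`j ∈ E`) with
`[Λ_i, Λ_j] = i·δ_{i,-j}·c`, and Virasoro elements `d_k` with
`[d_k, Λ_j] = -(j/N)·Λ_{j+Nk}` and `[d_k, d_l] = (k-l)·d_{k+l}`.  Given finitely
supported scalars `(t_i)`, set
`B_k = d_k - (1/N)·Σ_{i∈E₊} i·t_i·Λ_{i+Nk} + (1/(2N))·(Σ_{i,j∈E₊, i+j=-Nk} i·j·t_i·t_j)·c`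
(the locally finite sums are formalized via `finsum`).
-/

noncomputable section

/-- The element
`B_k = d_k - (1/N)·Σ_{i∈E₊} i·t_i·Λ_{i+Nk} + (1/(2N))·(Σ_{i,j∈E₊, i+j=-Nk} i·j·t_i·t_j)·c`. -/
noncomputable def Bel (N : ℕ) (E : Set ℤ) {L : Type*} [LieRing L] [LieAlgebra ℂ L]
    (c : L) (Lam : ℤ → L) (d : ℤ → L) (t : ℤ → ℂ) (k : ℤ) : L :=
  d k - (N : ℂ)⁻¹ • (∑ᶠ i ∈ {i : ℤ | i ∈ E ∧ 0 < i}, ((i : ℂ) * t i) • Lam (i + (N : ℤ) * k))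
    + ((2 * (N : ℂ))⁻¹ *
        ∑ᶠ p ∈ {p : ℤ × ℤ | (p.1 ∈ E ∧ 0 < p.1) ∧ (p.2 ∈ E ∧ 0 < p.2)
            ∧ p.1 + p.2 = -((N : ℤ) * k)},
          (p.1 : ℂ) * (p.2 : ℂ) * t p.1 * t p.2) • c

open Finset Function

namespace BelAux

lemma lie_sum' {L : Type*} [LieRing L] {α : Type*} (x : L) (s : Finset α) (f : α → L) :
    ⁅x, ∑ i ∈ s, f i⁆ = ∑ i ∈ s, ⁅x, f i⁆ :=
  map_sum (AddMonoidHom.mk' (fun y => ⁅x, y⁆) (lie_add x)) f s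

lemma sum_lie' {L : Type*} [LieRing L] {α : Type*} (x : L) (s : Finset α) (f : α → L) :
    ⁅∑ i ∈ s, f i, x⁆ = ∑ i ∈ s, ⁅f i, x⁆ :=
  map_sum (AddMonoidHom.mk' (fun y => ⁅y, x⁆) (fun a b => add_lie a b x)) f s

lemma memE (N : ℕ) (E : Set ℤ) (hEneg : ∀ j : ℤ, j ∈ E ↔ -j ∈ E)
    (hEadd : ∀ j ∈ E, j + (N : ℤ) ∈ E) :
    ∀ j ∈ E, ∀ m : ℤ, j + (N : ℤ) * m ∈ E := by
  have hsub : ∀ j ∈ E, j - (N : ℤ) ∈ E := by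
    intro j hj
    have h := hEadd (-j) ((hEneg j).mp hj)
    refine (hEneg (j - N)).mpr ?_
    rw [show -(j - (N:ℤ)) = -j + N by ring]
    exact h
  intro j hj m
  induction m using Int.induction_on with
  | zero => simpa using hj
  | succ n ih =>
      have h := hEadd _ ih
      rw [show j + (N:ℤ) * ((n:ℤ) + 1) = j + (N:ℤ) * n + N by ring]
      exact h
  | pred n ih =>
      have h := hsub _ ih
      rw [show j + (N:ℤ) * (-(n:ℤ) - 1) = j + (N:ℤ) * (-(n:ℤ)) - N by ring]
      exact h

def Sset (E : Set ℤ) : Set ℤ := {i : ℤ | i ∈ E ∧ 0 < i}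

def Qset (N : ℕ) (E : Set ℤ) (m : ℤ) : Set (ℤ × ℤ) :=
  {p : ℤ × ℤ | (p.1 ∈ E ∧ 0 < p.1) ∧ (p.2 ∈ E ∧ 0 < p.2) ∧ p.1 + p.2 = -((N : ℤ) * m)}

def SAsum (N : ℕ) (E : Set ℤ) {L : Type*} [LieRing L] [LieAlgebra ℂ L]
    (Lam : ℤ → L) (t : ℤ → ℂ) (T : Finset ℤ) (m : ℤ) : L :=
  ∑ i ∈ T, (Sset E).indicator (fun i => ((i : ℂ) * t i) • Lam (i + (N : ℤ) * m)) i

def Qsum (N : ℕ) (E : Set ℤ) (t : ℤ → ℂ) (T : Finset ℤ) (m : ℤ) : ℂ :=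
  ∑ p ∈ T ×ˢ T, (Qset N E m).indicator (fun p => (p.1 : ℂ) * (p.2 : ℂ) * t p.1 * t p.2) p

lemma Bel_eq (N : ℕ) (E : Set ℤ) {L : Type*} [LieRing L] [LieAlgebra ℂ L]
    (c : L) (Lam : ℤ → L) (d : ℤ → L) (t : ℤ → ℂ) (ht : (Function.support t).Finite)
    (m : ℤ) :
    Bel N E c Lam d t m
      = d m - (N : ℂ)⁻¹ • SAsum N E Lam t ht.toFinset m
        + ((2 * (N : ℂ))⁻¹ * Qsum N E t ht.toFinset m) • c := by
  unfold Bel SAsum Qsum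
  congr 3
  · rw [show {i : ℤ | i ∈ E ∧ 0 < i} = Sset E from rfl, finsum_mem_def]
    refine finsum_eq_sum_of_support_subset _ fun i hi => ?_
    simp only [Finset.coe_sort_coe, Set.Finite.coe_toFinset, Function.mem_support] at hi ⊢
    by_contra hiT
    have hti : t i = 0 := by simpa using hiT
    apply hi
    simp [Set.indicator_apply, hti]
  · rw [show {p : ℤ × ℤ | (p.1 ∈ E ∧ 0 < p.1) ∧ (p.2 ∈ E ∧ 0 < p.2)
        ∧ p.1 + p.2 = -((N : ℤ) * m)} = Qset N E m from rfl, finsum_mem_def]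
    refine finsum_eq_sum_of_support_subset _ fun p hp => ?_
    simp only [Function.mem_support] at hp
    simp only [Finset.coe_product, Set.Finite.coe_toFinset, Set.mem_prod, Function.mem_support]
    constructor
    · by_contra h1
      have : t p.1 = 0 := by simpa using h1
      apply hp; simp [Set.indicator_apply, this]
    · by_contra h2
      have : t p.2 = 0 := by simpa using h2
      apply hp; simp [Set.indicator_apply, this]

lemma lie_d_SA (N : ℕ) (E : Set ℤ) (hEneg : ∀ j : ℤ, j ∈ E ↔ -j ∈ E)
    (hEadd : ∀ j ∈ E, j + (N : ℤ) ∈ E)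
    {L : Type*} [LieRing L] [LieAlgebra ℂ L]
    (Lam : ℤ → L) (d : ℤ → L)
    (hdLam : ∀ (k : ℤ), ∀ j ∈ E, ⁅d k, Lam j⁆ = (-(j : ℂ) / (N : ℂ)) • Lam (j + (N : ℤ) * k))
    (t : ℤ → ℂ) (T : Finset ℤ) (k' m : ℤ) :
    ⁅d k', SAsum N E Lam t T m⁆
      = ∑ i ∈ T, (Sset E).indicator
          (fun i => (-((i : ℂ) + (N : ℂ) * m) / (N : ℂ) * ((i : ℂ) * t i))
            • Lam (i + (N : ℤ) * (m + k'))) i := by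
  unfold SAsum
  rw [lie_sum']
  refine Finset.sum_congr rfl fun i _ => ?_
  by_cases hi : i ∈ Sset E
  · rw [Set.indicator_of_mem hi, Set.indicator_of_mem hi, lie_smul,
      hdLam k' _ (memE N E hEneg hEadd i hi.1 m), smul_smul]
    rw [show i + (N : ℤ) * m + (N : ℤ) * k' = i + (N : ℤ) * (m + k') by ring]
    congr 1
    push_cast
    ring
  · simp [Set.indicator_of_notMem hi]

lemma Qset_swap (N : ℕ) (E : Set ℤ) (m : ℤ) (p : ℤ × ℤ) :
    (p.2, p.1) ∈ Qset N E m ↔ p ∈ Qset N E m := by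
  constructor <;> (rintro ⟨h1, h2, h3⟩; exact ⟨h2, h1, by omega⟩)

lemma sum_swap'' (T : Finset ℤ) (F : ℤ × ℤ → ℂ) :
    ∑ p ∈ T ×ˢ T, F p = ∑ p ∈ T ×ˢ T, F (p.2, p.1) := by
  rw [Finset.sum_product, Finset.sum_product]
  exact Finset.sum_comm

lemma lie_SA_SA (N : ℕ) (hN : 0 < N) (E : Set ℤ)
    (hEneg : ∀ j : ℤ, j ∈ E ↔ -j ∈ E)
    (hEadd : ∀ j ∈ E, j + (N : ℤ) ∈ E)
    {L : Type*} [LieRing L] [LieAlgebra ℂ L]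
    (c : L) (Lam : ℤ → L)
    (hLam : ∀ i ∈ E, ∀ j ∈ E, ⁅Lam i, Lam j⁆ = (if i + j = 0 then (i : ℂ) else 0) • c)
    (t : ℤ → ℂ) (T : Finset ℤ) (k l : ℤ) :
    ⁅SAsum N E Lam t T k, SAsum N E Lam t T l⁆
      = (∑ p ∈ T ×ˢ T, (Qset N E (k + l)).indicator
          (fun p => (p.1 : ℂ) * (p.2 : ℂ) * t p.1 * t p.2 * ((p.1 : ℂ) + (N : ℂ) * k)) p) • c := by
  unfold SAsum
  rw [sum_lie', Finset.sum_smul, Finset.sum_product]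
  refine Finset.sum_congr rfl fun i _ => ?_
  rw [lie_sum']
  refine Finset.sum_congr rfl fun j _ => ?_
  by_cases hi : i ∈ Sset E
  · by_cases hj : j ∈ Sset E
    · rw [Set.indicator_of_mem hi, Set.indicator_of_mem hj, smul_lie, lie_smul,
        hLam _ (memE N E hEneg hEadd i hi.1 k) _ (memE N E hEneg hEadd j hj.1 l)]
      by_cases hcond : i + (N : ℤ) * k + (j + (N : ℤ) * l) = 0
      · rw [if_pos hcond]
        have hNkl : (N:ℤ)*(k+l) = N*k + N*l := by ring
        have hmem : (i, j) ∈ Qset N E (k + l) := ⟨hi, hj, by omega⟩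
        rw [Set.indicator_of_mem hmem, smul_smul, smul_smul]
        congr 1
        have : ((i : ℂ) + (N : ℂ) * k) + ((j : ℂ) + (N : ℂ) * l) = 0 := by
          exact_mod_cast congrArg (Int.cast : ℤ → ℂ) hcond
        push_cast
        ring
      · rw [if_neg hcond]
        have hNkl : (N:ℤ)*(k+l) = N*k + N*l := by ring
        have hmem : (i, j) ∉ Qset N E (k + l) := by
          rintro ⟨-, -, h3⟩
          exact hcond (by omega)
        rw [Set.indicator_of_notMem hmem]
        simp
    · have hmem : (i, j) ∉ Qset N E (k + l) := fun h => hj h.2.1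
      rw [Set.indicator_of_notMem hj, Set.indicator_of_notMem hmem]
      simp
  · by_cases hj : j ∈ Sset E
    · have hmem : (i, j) ∉ Qset N E (k + l) := fun h => hi h.1
      rw [Set.indicator_of_notMem hi, Set.indicator_of_notMem hmem]
      simp
    · have hmem : (i, j) ∉ Qset N E (k + l) := fun h => hj h.2.1
      rw [Set.indicator_of_notMem hj, Set.indicator_of_notMem hmem]
      simp

lemma Qsum_key (N : ℕ) (E : Set ℤ) (t : ℤ → ℂ) (T : Finset ℤ) (k l : ℤ) :
    (∑ p ∈ T ×ˢ T, (Qset N E (k + l)).indicator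
        (fun p => (p.1 : ℂ) * (p.2 : ℂ) * t p.1 * t p.2 * ((p.1 : ℂ) + (N : ℂ) * k)) p) * 2
      = (N : ℂ) * ((k - l : ℤ) : ℂ) * Qsum N E t T (k + l) := by
  unfold Qsum
  rw [mul_two]
  nth_rewrite 1 [sum_swap'' T _]
  rw [← Finset.sum_add_distrib, Finset.mul_sum]
  refine Finset.sum_congr rfl fun p hp => ?_
  by_cases hmem : p ∈ Qset N E (k + l)
  · have hmem' : (p.2, p.1) ∈ Qset N E (k + l) := (Qset_swap N E (k + l) p).mpr hmem
    rw [Set.indicator_of_mem hmem, Set.indicator_of_mem hmem', Set.indicator_of_mem hmem]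
    obtain ⟨-, -, h3⟩ := hmem
    have hc3 : (p.1 : ℂ) + (p.2 : ℂ) = -((N : ℂ) * ((k : ℂ) + (l : ℂ))) := by
      exact_mod_cast congrArg (Int.cast : ℤ → ℂ) h3
    push_cast
    linear_combination ((p.1 : ℂ) * (p.2 : ℂ) * t p.1 * t p.2) * hc3
  · have hmem' : (p.2, p.1) ∉ Qset N E (k + l) := fun h => hmem ((Qset_swap N E (k + l) p).mp h)
    rw [Set.indicator_of_notMem hmem, Set.indicator_of_notMem hmem',
      Set.indicator_of_notMem hmem]
    simp

lemma SA_sub (N : ℕ) (hN : 0 < N) (E : Set ℤ) {L : Type*} [LieRing L] [LieAlgebra ℂ L]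
    (Lam : ℤ → L) (t : ℤ → ℂ) (T : Finset ℤ) (k l : ℤ) :
    (∑ i ∈ T, (Sset E).indicator
        (fun i => (-((i : ℂ) + (N : ℂ) * k) / (N : ℂ) * ((i : ℂ) * t i))
          • Lam (i + (N : ℤ) * (k + l))) i)
      - (∑ i ∈ T, (Sset E).indicator
        (fun i => (-((i : ℂ) + (N : ℂ) * l) / (N : ℂ) * ((i : ℂ) * t i))
          • Lam (i + (N : ℤ) * (l + k))) i)
      = ((l - k : ℤ) : ℂ) • SAsum N E Lam t T (k + l) := by
  have hNc : (N : ℂ) ≠ 0 := Nat.cast_ne_zero.mpr hN.ne'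
  unfold SAsum
  rw [Finset.smul_sum, ← Finset.sum_sub_distrib]
  refine Finset.sum_congr rfl fun i _ => ?_
  rw [show l + k = k + l from add_comm l k]
  by_cases hi : i ∈ Sset E
  · rw [Set.indicator_of_mem hi, Set.indicator_of_mem hi, Set.indicator_of_mem hi,
      smul_smul, ← sub_smul]
    congr 1
    push_cast
    field_simp
    ring
  · simp [Set.indicator_of_notMem hi]

lemma EB_eq (N : ℕ) (hN : 0 < N) (E : Set ℤ) {L : Type*} [LieRing L] [LieAlgebra ℂ L]
    (c : L) (t : ℤ → ℂ) (T : Finset ℤ) (k l : ℤ) :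
    (N : ℂ)⁻¹ • ((N : ℂ)⁻¹ • ((∑ p ∈ T ×ˢ T, (Qset N E (k + l)).indicator
        (fun p => (p.1 : ℂ) * (p.2 : ℂ) * t p.1 * t p.2 * ((p.1 : ℂ) + (N : ℂ) * k)) p) • c))
      = ((k - l : ℤ) : ℂ) • (((2 * (N : ℂ))⁻¹ * Qsum N E t T (k + l)) • c) := by
  have hNc : (N : ℂ) ≠ 0 := Nat.cast_ne_zero.mpr hN.ne'
  rw [smul_smul, smul_smul, smul_smul]
  congr 1
  have key := Qsum_key N E t T k l
  have key2 : (∑ p ∈ T ×ˢ T, (Qset N E (k + l)).indicator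
      (fun p => (p.1 : ℂ) * (p.2 : ℂ) * t p.1 * t p.2 * ((p.1 : ℂ) + (N : ℂ) * k)) p)
      = (N : ℂ) * ((k - l : ℤ) : ℂ) * Qsum N E t T (k + l) / 2 := by
    linear_combination key / 2
  rw [key2]
  field_simp

end BelAux

open BelAux

/-- For all integers `k` and `l`, `[B_k, B_l] = (k-l)·B_{k+l}` in `𝔤`. -/
theorem Bel_commutator
    (N : ℕ) (hN : 0 < N) (E : Set ℤ)
    (hEneg : ∀ j : ℤ, j ∈ E ↔ -j ∈ E)
    (hEdvd : ∀ j ∈ E, ¬ ((N : ℤ) ∣ j))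
    (hEadd : ∀ j ∈ E, j + (N : ℤ) ∈ E)
    {L : Type*} [LieRing L] [LieAlgebra ℂ L]
    (c : L) (hc : ∀ x : L, ⁅c, x⁆ = 0)
    (Lam : ℤ → L) (d : ℤ → L)
    (hLam : ∀ i ∈ E, ∀ j ∈ E, ⁅Lam i, Lam j⁆ = (if i + j = 0 then (i : ℂ) else 0) • c)
    (hdLam : ∀ (k : ℤ), ∀ j ∈ E, ⁅d k, Lam j⁆ = (-(j : ℂ) / (N : ℂ)) • Lam (j + (N : ℤ) * k))
    (hdd : ∀ k l : ℤ, ⁅d k, d l⁆ = ((k - l : ℤ) : ℂ) • d (k + l))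
    (t : ℤ → ℂ) (ht : (Function.support t).Finite)
    (k l : ℤ) :
    ⁅Bel N E c Lam d t k, Bel N E c Lam d t l⁆
      = ((k - l : ℤ) : ℂ) • Bel N E c Lam d t (k + l) := by
  have hNc : (N : ℂ) ≠ 0 := Nat.cast_ne_zero.mpr hN.ne'
  have hc' : ∀ x : L, ⁅x, c⁆ = 0 := fun x => by rw [← lie_skew, hc, neg_zero]
  rw [Bel_eq N E c Lam d t ht k, Bel_eq N E c Lam d t ht l, Bel_eq N E c Lam d t ht (k + l)]
  have hXk : ⁅d l, SAsum N E Lam t ht.toFinset k⁆ = _ :=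
    lie_d_SA N E hEneg hEadd Lam d hdLam t ht.toFinset l k
  have hXl : ⁅d k, SAsum N E Lam t ht.toFinset l⁆ = _ :=
    lie_d_SA N E hEneg hEadd Lam d hdLam t ht.toFinset k l
  have hskew : ⁅SAsum N E Lam t ht.toFinset k, d l⁆
      = -⁅d l, SAsum N E Lam t ht.toFinset k⁆ := by rw [← lie_skew]
  have hAA := lie_SA_SA N hN E hEneg hEadd c Lam hLam t ht.toFinset k l
  simp only [lie_add, add_lie, lie_sub, sub_lie, lie_smul, smul_lie, hc, hc', smul_zero,
    zero_add, add_zero, sub_zero, zero_sub, neg_zero, hdd, hskew, hXk, hXl, hAA, smul_neg,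
    neg_neg]
  rw [smul_sub ((N : ℂ)⁻¹), EB_eq N hN E c t ht.toFinset k l,
    eq_add_of_sub_eq (SA_sub N hN E Lam t ht.toFinset k l)]
  push_cast
  module
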